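/- Let M ≥ 2, 0 < η ≤ 1/2, and set c = (6.16/η)^{1 + 2/M}. Let ‖·‖ be any norm on ℝ^d, let a_1, …, a_N, b_1, …, b_N ∈ ℝ^d, let Z be uniformly distributed over the list (a_1, …, a_N, b_1, …, b_N), and suppose σ > 0 satisfies E‖Z − EZ‖^M ≤ σ^M. Let X be a random vector in ℝ^d whose law has density proportional to exp(−‖x‖/(cσ)) with respect to Lebesgue measure. Then for every measurable randomized classifier g : ℝ^d → [0,1], (1/(2N)) Σ_{i=1}^N E[g(a_i + X)] + (1/(2N)) Σ_{j=1}^N E[1 − g(b_j + X)] ≤ 1/2 + η. -/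

import Mathlib

open MeasureTheory ENNReal

private lemma seminorm_pi_continuous {d : ℕ} (p : Seminorm ℝ (Fin d → ℝ)) : Continuous p := by
  have hbound : ∀ v : Fin d → ℝ, p v ≤ (∑ i, p (Pi.single i 1)) * ‖v‖ := by
    intro v
    have h1 : p v ≤ ∑ i, p (Pi.single i (v i)) := by
      conv_lhs => rw [← Finset.univ_sum_single v]
      exact Finset.le_sum_of_subadditive p (map_zero p).le (map_add_le_add p) _ _
    refine h1.trans ?_
    rw [Finset.sum_mul]
    refine Finset.sum_le_sum fun i _ => ?_
    have h2 : Pi.single i (v i) = v i • (Pi.single i 1 : Fin d → ℝ) := by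
      ext j; by_cases hji : j = i <;> simp [Pi.single_apply, hji]
    rw [h2, map_smul_eq_mul]
    calc |v i| * p (Pi.single i 1) ≤ ‖v‖ * p (Pi.single i 1) := by
          exact mul_le_mul_of_nonneg_right (by simpa [Real.norm_eq_abs] using norm_le_pi_norm v i)
            (apply_nonneg p _)
      _ = p (Pi.single i 1) * ‖v‖ := mul_comm _ _
  have hlip : LipschitzWith (Real.toNNReal (∑ i, p (Pi.single i 1))) p := by
    refine LipschitzWith.of_dist_le_mul fun x y => ?_
    rw [Real.dist_eq, dist_eq_norm]
    calc |p x - p y| ≤ p (x - y) := abs_sub_map_le_sub p x y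
      _ ≤ (∑ i, p (Pi.single i 1)) * ‖x - y‖ := hbound _
      _ ≤ (Real.toNNReal (∑ i, p (Pi.single i 1)) : ℝ) * ‖x - y‖ :=
          mul_le_mul_of_nonneg_right (Real.le_coe_toNNReal _) (norm_nonneg _)
  exact hlip.continuous

private lemma lintegral_shift {d : ℕ} (H : (Fin d → ℝ) → ℝ≥0∞) (x : Fin d → ℝ) :
    ∫⁻ v, H (x + v) = ∫⁻ w, H w := by
  calc ∫⁻ v, H (x + v) = ∫⁻ v, H ((MeasurableEquiv.addLeft x) v) := rfl
    _ = ∫⁻ w, H w ∂(Measure.map (MeasurableEquiv.addLeft x) volume) :=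
        (lintegral_map_equiv H _).symm
    _ = ∫⁻ w, H w := by
        have h : Measure.map (MeasurableEquiv.addLeft x) (volume : Measure (Fin d → ℝ)) = volume := by
          simpa using map_add_left_eq_self (volume : Measure (Fin d → ℝ)) x
        rw [h]

private lemma real_two_rpow (x y M : ℝ) (hx : 0 ≤ x) (hy : 0 ≤ y) (hM : 1 ≤ M) :
    (x + y) ^ M ≤ 2 ^ (M - 1) * (x ^ M + y ^ M) := by
  have h := NNReal.rpow_add_le_mul_rpow_add_rpow x.toNNReal y.toNNReal hM
  have h2 := NNReal.coe_le_coe.2 h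
  push_cast at h2
  rwa [Real.coe_toNNReal x hx, Real.coe_toNNReal y hy] at h2


/-- let `M ≥ 2`, `0 < η ≤ 1/2`, `c = (6.16/η)^{1+2/M}`, let `‖·‖`
be any norm on `ℝ^d` (a seminorm `p` with `p x = 0 → x = 0`), let
`a_1, …, a_N, b_1, …, b_N ∈ ℝ^d`, let `Z` be uniform on the combined list and
suppose `σ > 0` satisfies `E‖Z - EZ‖^M ≤ σ^M`. Let `X` have density
proportional to `exp(-‖x‖/(cσ))` w.r.t. Lebesgue measure. Then every
measurable randomized classifier `g : ℝ^d → [0,1]` has membership-inference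
success probability
`(1/(2N)) ∑_i E[g(a_i + X)] + (1/(2N)) ∑_j E[1 - g(b_j + X)] ≤ 1/2 + η`. -/
theorem statement_11 (d N : ℕ) (hN : 0 < N) (M η σ : ℝ)
    (hM : 2 ≤ M) (hη0 : 0 < η) (hη1 : η ≤ 1 / 2) (hσ : 0 < σ)
    (p : Seminorm ℝ (Fin d → ℝ)) (hpdef : ∀ v : Fin d → ℝ, p v = 0 → v = 0)
    (a b : Fin N → (Fin d → ℝ))
    (hmom :
      (1 / (2 * N : ℝ)) *
          ((∑ i, p (a i - (1 / (2 * N : ℝ)) • (∑ i, a i + ∑ j, b j)) ^ M) +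
            ∑ j, p (b j - (1 / (2 * N : ℝ)) • (∑ i, a i + ∑ j, b j)) ^ M) ≤
        σ ^ M)
    (μ : Measure (Fin d → ℝ)) [IsProbabilityMeasure μ]
    (K : ℝ) (hK : 0 < K)
    (hdens : μ = volume.withDensity
      (fun v => ENNReal.ofReal
        (K * Real.exp (-(p v) / ((6.16 / η) ^ (1 + 2 / M) * σ)))))
    (g : (Fin d → ℝ) → ℝ) (hgmeas : Measurable g)
    (hg : ∀ v, g v ∈ Set.Icc (0 : ℝ) 1) :
    (1 / (2 * N : ℝ)) * (∑ i, ∫ v, g (a i + v) ∂μ) +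
        (1 / (2 * N : ℝ)) * (∑ j, ∫ v, (1 - g (b j + v)) ∂μ) ≤
      1 / 2 + η := by
  have hN' : (0:ℝ) < N := by exact_mod_cast hN
  have hM0 : (0:ℝ) < M := by linarith
  have hc0 : (0:ℝ) < (6.16 / η) ^ (1 + 2 / M) := Real.rpow_pos_of_pos (by positivity) _
  set c : ℝ := (6.16 / η) ^ (1 + 2 / M) with hcdef
  set s : ℝ := c * σ with hsdef
  have hs0 : 0 < s := mul_pos hc0 hσ
  set m : Fin d → ℝ := (1 / (2 * N : ℝ)) • (∑ i, a i + ∑ j, b j) with hmdef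
  set f : (Fin d → ℝ) → ℝ≥0∞ :=
    fun v => ENNReal.ofReal (K * Real.exp (-(p v) / s)) with hfdef
  have hpcont : Continuous fun v => (p v : ℝ) := seminorm_pi_continuous p
  have hfmeas : Measurable f := by
    apply Measurable.ennreal_ofReal
    exact measurable_const.mul ((Real.continuous_exp.comp (hpcont.neg.div_const s)).measurable)
  set L : (Fin d → ℝ) → ℝ≥0∞ :=
    fun x => ∫⁻ w, ENNReal.ofReal (g w) * f (w - x) with hLdef
  have hgm : ∀ x : Fin d → ℝ, Measurable fun v => g (x + v) :=
    fun x => hgmeas.comp (measurable_const_add x)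
  have hftot : ∫⁻ v, f v = 1 := by
    have h := measure_univ (μ := μ)
    rw [hdens, withDensity_apply f MeasurableSet.univ, setLIntegral_univ] at h
    exact h
  have hLle : ∀ x, L x ≤ 1 := by
    intro x
    calc L x ≤ ∫⁻ w, 1 * f (w - x) := by
          refine lintegral_mono fun w => ?_
          exact mul_le_mul_left (ENNReal.ofReal_le_one.2 (hg w).2) _
      _ = ∫⁻ w, f (w - x) := by simp
      _ = ∫⁻ v, f v := by
          rw [← lintegral_shift (fun w => f (w - x)) x]
          simp
      _ = 1 := hftot
  have hI : ∀ x : Fin d → ℝ, ∫ v, g (x + v) ∂μ = (L x).toReal := by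
    intro x
    rw [integral_eq_lintegral_of_nonneg_ae (Filter.Eventually.of_forall fun v => (hg (x + v)).1)
      (hgm x).aestronglyMeasurable]
    congr 1
    rw [hdens, lintegral_withDensity_eq_lintegral_mul _ hfmeas ((hgm x).ennreal_ofReal)]
    calc ∫⁻ v, (f * fun v => ENNReal.ofReal (g (x + v))) v
        = ∫⁻ v, (fun w => ENNReal.ofReal (g w) * f (w - x)) (x + v) := by
          refine lintegral_congr fun v => ?_
          simp [mul_comm]
      _ = L x := by
          rw [hLdef]
          simpa using lintegral_shift (fun w => ENNReal.ofReal (g w) * f (w - x)) x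
  have hLcomp : ∀ x y : Fin d → ℝ,
      L x ≤ ENNReal.ofReal (Real.exp (p (x - y) / s)) * L y := by
    intro x y
    rw [hLdef]
    simp only
    rw [← lintegral_const_mul' _ _ ENNReal.ofReal_ne_top]
    refine lintegral_mono fun w => ?_
    rw [← mul_assoc, mul_comm (ENNReal.ofReal (Real.exp (p (x - y) / s)))
      (ENNReal.ofReal (g w)), mul_assoc]
    refine mul_le_mul_right ?_ _
    rw [hfdef]
    simp only
    rw [← ENNReal.ofReal_mul (Real.exp_nonneg _)]
    refine ENNReal.ofReal_le_ofReal ?_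
    rw [← mul_assoc, mul_comm (Real.exp _) K, mul_assoc, ← Real.exp_add]
    refine mul_le_mul_of_nonneg_left (Real.exp_le_exp.2 ?_) hK.le
    rw [← add_div, div_le_div_iff_of_pos_right hs0]
    have h3 : p (w - y) ≤ p (w - x) + p (x - y) := by
      have he : w - y = (w - x) + (x - y) := by abel
      rw [he]; exact map_add_le_add p _ _
    linarith
  set α : ℝ := M / (M + 2) with hαdef
  have hα0 : 0 < α := by positivity
  have hα1 : α ≤ 1 := by
    rw [div_le_one (by linarith)]; linarith
  set t : Fin N → ℝ := fun i => p (a i - b i) / s with htdef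
  have ht0 : ∀ i, 0 ≤ t i := fun i => div_nonneg (apply_nonneg p _) hs0.le
  have hIt : ∀ x, (L x).toReal ≤ 1 := fun x => by
    simpa using ENNReal.toReal_mono ENNReal.one_ne_top (hLle x)
  have hdiff : ∀ i, (L (a i)).toReal - (L (b i)).toReal ≤ t i ^ α := by
    intro i
    have hexp : (L (a i)).toReal ≤ Real.exp (t i) * (L (b i)).toReal := by
      have h := hLcomp (a i) (b i)
      have hfin : ENNReal.ofReal (Real.exp (p (a i - b i) / s)) * L (b i) ≠ ⊤ :=
        ENNReal.mul_ne_top ENNReal.ofReal_ne_top (lt_of_le_of_lt (hLle _) ENNReal.one_lt_top).ne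
      have h2 := ENNReal.toReal_mono hfin h
      rwa [ENNReal.toReal_mul, ENNReal.toReal_ofReal (Real.exp_nonneg _)] at h2
    have h1e : (L (a i)).toReal - (L (b i)).toReal ≤ 1 - Real.exp (-(t i)) := by
      have hb' : Real.exp (-(t i)) * (L (a i)).toReal ≤ (L (b i)).toReal := by
        rw [Real.exp_neg, inv_mul_le_iff₀ (Real.exp_pos _)]
        exact hexp
      nlinarith [hIt (a i), ENNReal.toReal_nonneg (a := L (a i)),
        Real.exp_le_one_iff.2 (neg_nonpos.2 (ht0 i)), Real.exp_nonneg (-(t i))]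
    rcases le_or_gt 1 (t i) with h | h
    · have h1 : (1:ℝ) ≤ t i ^ α := Real.one_le_rpow h hα0.le
      have := hIt (a i)
      have := ENNReal.toReal_nonneg (a := L (b i))
      linarith
    · rcases eq_or_lt_of_le (ht0 i) with h0 | h0
      · have hz : t i ^ α = 0 := by rw [← h0, Real.zero_rpow hα0.ne']
        have he : Real.exp (-(t i)) = 1 := by rw [← h0, neg_zero, Real.exp_zero]
        rw [he] at h1e
        linarith
      · have h2 : 1 - Real.exp (-(t i)) ≤ t i := by
          have := Real.add_one_le_exp (-(t i))
          linarith
        have h3 : t i ≤ t i ^ α := by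
          calc t i = t i ^ (1:ℝ) := (Real.rpow_one _).symm
            _ ≤ t i ^ α := Real.rpow_le_rpow_of_exponent_ge h0 h.le hα1
        linarith
  -- rewrite the goal
  have hInt : ∀ x : Fin d → ℝ, Integrable (fun v => g (x + v)) μ := by
    intro x
    refine ⟨(hgm x).aestronglyMeasurable,
      HasFiniteIntegral.of_bounded (C := 1) (Filter.Eventually.of_forall fun v => ?_)⟩
    rw [Real.norm_eq_abs, abs_le]
    exact ⟨by linarith [(hg (x+v)).1], (hg (x+v)).2⟩
  have hone : ∀ j, ∫ v, (1 - g (b j + v)) ∂μ = 1 - ∫ v, g (b j + v) ∂μ := by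
    intro j
    rw [integral_sub (integrable_const 1) (hInt (b j)), integral_const]
    simp
  have h2N : (2 * (N:ℝ)) ≠ 0 := by positivity
  have hgoal : (1 / (2 * N : ℝ)) * (∑ i, ∫ v, g (a i + v) ∂μ) +
      (1 / (2 * N : ℝ)) * (∑ j, ∫ v, (1 - g (b j + v)) ∂μ)
      = 1 / 2 + (1 / (2 * N : ℝ)) * ∑ i, ((L (a i)).toReal - (L (b i)).toReal) := by
    simp only [hone, hI]
    rw [Finset.sum_sub_distrib, Finset.sum_sub_distrib, Finset.sum_const, Finset.card_univ,
      Fintype.card_fin, nsmul_eq_mul, mul_one]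
    field_simp
    ring
  rw [hgoal]
  have key : (1 / (2 * N : ℝ)) * ∑ i, ((L (a i)).toReal - (L (b i)).toReal) ≤ η := by
    have hMp2 : (0:ℝ) < M + 2 := by linarith
    have hpow : ∀ i : Fin N, (t i ^ α) ^ (M + 2) = t i ^ M := by
      intro i
      rw [← Real.rpow_mul (ht0 i)]
      congr 1
      rw [hαdef]
      field_simp
    have hmean : ∑ i, (1/(N:ℝ)) * t i ^ α ≤ (∑ i, (1/(N:ℝ)) * t i ^ M) ^ (1/(M+2)) := by
      have h := Real.arith_mean_le_rpow_mean Finset.univ (fun _ => 1/(N:ℝ)) (fun i => t i ^ α)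
        (fun i _ => by positivity)
        (by rw [Finset.sum_const, Finset.card_univ, Fintype.card_fin, nsmul_eq_mul]; field_simp)
        (fun i _ => Real.rpow_nonneg (ht0 i) α) (p := M + 2) (by linarith)
      simp only [hpow] at h
      exact h
    have hmomt : ∑ i, t i ^ M ≤ (N:ℝ) * (2/c) ^ M := by
      have hstep : ∀ i : Fin N,
          t i ^ M ≤ 2 ^ (M-1) * (p (a i - m) ^ M + p (b i - m) ^ M) / s ^ M := by
        intro i
        have htri : p (a i - b i) ≤ p (a i - m) + p (b i - m) := by
          have he : a i - b i = (a i - m) + (m - b i) := by abel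
          rw [he]
          refine (map_add_le_add p _ _).trans ?_
          rw [map_sub_rev p m (b i)]
        have h1 : t i ^ M = p (a i - b i) ^ M / s ^ M := by
          rw [htdef]
          simp only
          rw [Real.div_rpow (apply_nonneg p _) hs0.le]
        rw [h1]
        have hsM : (0:ℝ) < s ^ M := Real.rpow_pos_of_pos hs0 _
        rw [div_le_div_iff_of_pos_right hsM]
        calc p (a i - b i) ^ M ≤ (p (a i - m) + p (b i - m)) ^ M :=
              Real.rpow_le_rpow (apply_nonneg p _) htri hM0.le
          _ ≤ 2 ^ (M-1) * (p (a i - m) ^ M + p (b i - m) ^ M) :=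
              real_two_rpow _ _ _ (apply_nonneg p _) (apply_nonneg p _) (by linarith)
      have hsumxy : (∑ i, p (a i - m) ^ M) + ∑ j, p (b j - m) ^ M ≤ 2 * N * σ ^ M := by
        have h2Npos : (0:ℝ) < 2 * N := by positivity
        calc (∑ i, p (a i - m) ^ M) + ∑ j, p (b j - m) ^ M
            = (2*(N:ℝ)) * ((1 / (2 * N : ℝ)) *
              ((∑ i, p (a i - m) ^ M) + ∑ j, p (b j - m) ^ M)) := by
              field_simp
          _ ≤ (2*(N:ℝ)) * σ ^ M := mul_le_mul_of_nonneg_left hmom h2Npos.le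
          _ = 2 * N * σ ^ M := by ring
      calc ∑ i, t i ^ M ≤ ∑ i, 2 ^ (M-1) * (p (a i - m) ^ M + p (b i - m) ^ M) / s ^ M :=
            Finset.sum_le_sum fun i _ => hstep i
        _ = 2^(M-1) / s^M * ((∑ i, p (a i - m) ^ M) + ∑ i, p (b i - m) ^ M) := by
            rw [← Finset.sum_add_distrib, Finset.mul_sum]
            exact Finset.sum_congr rfl fun i _ => by ring
        _ ≤ 2^(M-1) / s^M * (2 * N * σ ^ M) := by
            refine mul_le_mul_of_nonneg_left hsumxy ?_
            have hsM : (0:ℝ) < s ^ M := Real.rpow_pos_of_pos hs0 _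
            have h2M : (0:ℝ) < 2 ^ (M-1) := Real.rpow_pos_of_pos (by norm_num) _
            positivity
        _ = (N:ℝ) * (2/c)^M := by
            have hsM : s ^ M = c ^ M * σ ^ M := Real.mul_rpow hc0.le hσ.le
            have hdM : ((2:ℝ)/c) ^ M = 2 ^ M / c ^ M := Real.div_rpow (by norm_num) hc0.le M
            have h2M : (2:ℝ) ^ (M-1) = 2 ^ M / 2 := by
              rw [Real.rpow_sub (by norm_num), Real.rpow_one]
            have hcM : (0:ℝ) < c ^ M := Real.rpow_pos_of_pos hc0 _
            have hσM : (0:ℝ) < σ ^ M := Real.rpow_pos_of_pos hσ _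
            rw [hsM, hdM, h2M]
            field_simp
    have hfin1 : ∑ i, (1/(N:ℝ)) * t i ^ M ≤ (2/c) ^ M := by
      rw [← Finset.mul_sum, one_div, inv_mul_le_iff₀ hN']
      exact hmomt
    have hfin2 : (∑ i, (1/(N:ℝ)) * t i ^ M) ^ (1/(M+2)) ≤ (((2:ℝ)/c) ^ M) ^ (1/(M+2)) := by
      refine Real.rpow_le_rpow ?_ hfin1 (by positivity)
      refine Finset.sum_nonneg fun i _ => ?_
      have := Real.rpow_nonneg (ht0 i) M
      positivity
    have hfin3 : (((2:ℝ)/c) ^ M) ^ (1/(M+2)) = (2/c) ^ α := by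
      rw [← Real.rpow_mul (by positivity), mul_one_div]
    have hfin4 : ((2:ℝ)/c) ^ α ≤ 2 * η / 6.16 := by
      have hcα : c ^ α = 6.16 / η := by
        rw [hcdef, ← Real.rpow_mul (by positivity)]
        have h1 : (1 + 2/M) * α = 1 := by
          rw [hαdef]
          field_simp
        rw [h1, Real.rpow_one]
      rw [Real.div_rpow (by norm_num) hc0.le α, hcα]
      have h2α : (2:ℝ) ^ α ≤ 2 := by
        calc (2:ℝ)^α ≤ 2^(1:ℝ) := Real.rpow_le_rpow_of_exponent_le (by norm_num) hα1
          _ = 2 := Real.rpow_one 2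
      have h616 : (0:ℝ) < 6.16/η := by positivity
      calc (2:ℝ)^α/(6.16/η) ≤ 2/(6.16/η) := by gcongr
        _ = 2*η/6.16 := by
            field_simp
    calc (1/(2*N:ℝ)) * ∑ i, ((L (a i)).toReal - (L (b i)).toReal)
        ≤ (1/(2*N:ℝ)) * ∑ i, t i ^ α := by
          refine mul_le_mul_of_nonneg_left (Finset.sum_le_sum fun i _ => hdiff i) (by positivity)
      _ = (1/2) * (∑ i, (1/(N:ℝ)) * t i ^ α) := by
          rw [← Finset.mul_sum]
          ring
      _ ≤ (1/2) * ((∑ i, (1/(N:ℝ)) * t i ^ M) ^ (1/(M+2))) :=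
          mul_le_mul_of_nonneg_left hmean (by norm_num)
      _ ≤ (1/2) * ((((2:ℝ)/c) ^ M) ^ (1/(M+2))) :=
          mul_le_mul_of_nonneg_left hfin2 (by norm_num)
      _ = (1/2) * (((2:ℝ)/c) ^ α) := by rw [hfin3]
      _ ≤ (1/2) * (2 * η / 6.16) :=
          mul_le_mul_of_nonneg_left hfin4 (by norm_num)
      _ = η / 6.16 := by ring
      _ ≤ η := div_le_self hη0.le (by norm_num)
  linarith
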